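/- arXiv:2509.20610 — 8 statements merged into one kernel-verified Lean document; each statement's English description precedes it below -/
import Mathlib

section
/- Let N ≥ 2 be an integer, let v₀ = (1/√N, √((N−1)/N)) ∈ ℂ² (the Hadamard-initialized amplitude vector), and let a = 1 − 2/N. Then for every φ ∈ ℝ, the one-step target probability satisfies P(φ) = |(A(φ)·v₀)₀|² = (1/N)·((a·cos φ − a − 1)² + sin² φ). -/
open Real Complex Matrix

/-- The generalized Grover iteration matrix with phase `φ` for a database of size `N`. -/
noncomputable def groverA (N : ℕ) (φ : ℝ) : Matrix (Fin 2) (Fin 2) ℂ :=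
  !![Complex.exp (φ * Complex.I) * ((1 - Complex.exp (φ * Complex.I)) / (N : ℂ) - 1),
     ((Real.sqrt ((N : ℝ) - 1) : ℂ) / (N : ℂ)) * (1 - Complex.exp (φ * Complex.I));
     ((Real.sqrt ((N : ℝ) - 1) : ℂ) / (N : ℂ)) * Complex.exp (φ * Complex.I) *
       (1 - Complex.exp (φ * Complex.I)),
     -(1 / (N : ℂ) + (1 - 1 / (N : ℂ)) * Complex.exp (φ * Complex.I))]

/-- The one-step target probability: the squared modulus of the first component of `A(φ)·v`. -/
noncomputable def targetProb (N : ℕ) (φ : ℝ) (v : Fin 2 → ℂ) : ℝ :=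
  ‖(groverA N φ).mulVec v 0‖ ^ 2

theorem stmt_0 (N : ℕ) (hN : 2 ≤ N)
    (v₀ : Fin 2 → ℂ)
    (hv : v₀ = ![((1 / Real.sqrt N : ℝ) : ℂ), ((Real.sqrt (((N : ℝ) - 1) / N) : ℝ) : ℂ)])
    (a : ℝ) (ha : a = 1 - 2 / (N : ℝ)) (φ : ℝ) :
    targetProb N φ v₀ =
      (1 / (N : ℝ)) * ((a * Real.cos φ - a - 1) ^ 2 + Real.sin φ ^ 2) := by
  subst hv ha
  have hN0 : (0:ℝ) < N := by positivity
  have hN1 : (1:ℝ) ≤ N := by exact_mod_cast Nat.one_le_of_lt hN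
  set c := Real.cos φ with hc
  set s := Real.sin φ with hs
  set u := Real.sqrt N with hu
  set w := Real.sqrt ((N:ℝ) - 1) with hw
  have hu2 : u ^ 2 = N := Real.sq_sqrt hN0.le
  have hw2 : w ^ 2 = (N:ℝ) - 1 := Real.sq_sqrt (by linarith)
  have hupos : 0 < u := Real.sqrt_pos.mpr hN0
  have hdiv : Real.sqrt (((N:ℝ) - 1) / N) = w / u := Real.sqrt_div (by linarith) N
  have hcs : c ^ 2 + s ^ 2 = 1 := by
    rw [hc, hs]; exact Real.cos_sq_add_sin_sq φ
  have hNC : ((N:ℂ)) ≠ 0 := by exact_mod_cast hN0.ne'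
  have huC : ((u:ℂ)) ≠ 0 := by exact_mod_cast hupos.ne'
  have hwC : ((w:ℂ)) ^ 2 = (N:ℂ) - 1 := by exact_mod_cast hw2
  have huC2 : ((u:ℂ)) ^ 2 = (N:ℂ) := by exact_mod_cast hu2
  set X : ℝ := s ^ 2 - c ^ 2 + (2 - 2 * N) * c + N - 1 with hX
  set Y : ℝ := -2 * c * s + (2 - 2 * N) * s with hY
  have hexp : Complex.exp (φ * Complex.I) = (c : ℂ) + (s : ℂ) * Complex.I := by
    rw [Complex.exp_mul_I, hc, hs, Complex.ofReal_cos, Complex.ofReal_sin]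
  have hE : (groverA N φ).mulVec
      ![((1 / u : ℝ) : ℂ), ((Real.sqrt (((N : ℝ) - 1) / N) : ℝ) : ℂ)] 0
      = ((X : ℂ) + (Y : ℂ) * Complex.I) / ((N : ℂ) * (u : ℂ)) := by
    simp only [groverA, Matrix.mulVec, dotProduct, Fin.sum_univ_two,
      Matrix.cons_val', Matrix.cons_val_zero, Matrix.cons_val_one, Matrix.head_cons,
      Matrix.empty_val', Matrix.cons_val_fin_one, Matrix.head_fin_const, Matrix.of_apply]
    rw [hexp, hdiv, hX, hY, ← hw]
    push_cast
    field_simp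
    linear_combination ((1:ℂ) - (c:ℂ) - (s:ℂ)*Complex.I) * hwC - (s:ℂ)^2 * Complex.I_sq
  have habs : ‖(N : ℂ) * (u : ℂ)‖ = N * u := by
    rw [norm_mul, Complex.norm_natCast]
    simp [Complex.norm_real, abs_of_pos hupos]
  rw [targetProb, hE, norm_div, habs, div_pow, Complex.sq_norm, Complex.normSq_add_mul_I]
  have key : X ^ 2 + Y ^ 2 = ((N - 2) * c - 2 * (N - 1)) ^ 2 + (N:ℝ) ^ 2 * s ^ 2 := by
    rw [hX, hY]
    linear_combination (c^2 + s^2 + (4*N - 4)*c + 3*(N:ℝ)^2 - 6*N + 3) * hcs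
  rw [key]
  have : ((N:ℝ) * u) ^ 2 = N ^ 2 * N := by rw [mul_pow, hu2]
  rw [this]
  field_simp
  ring
end

section
/- Let N ≥ 4 be an integer and let v₀ = (1/√N, √((N−1)/N)) ∈ ℂ² (the Hadamard-initialized amplitude vector). Then for every φ ∈ [−π, π], the one-step target probability satisfies |(A(φ)·v₀)₀|² ≤ |(A(π)·v₀)₀|²; that is, the phase change φ = π of the classical Grover's algorithm maximizes the target probability in the first iteration. -/
open Real Complex Matrix

lemma targetProb_formula (N : ℕ) (hN : 4 ≤ N) (φ : ℝ) :
    targetProb N φ ![((1 / Real.sqrt N : ℝ) : ℂ), ((Real.sqrt (((N : ℝ) - 1) / N) : ℝ) : ℂ)]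
    = ((((N:ℝ)-1) - 2*((N:ℝ)-1)*Real.cos φ - (Real.cos φ^2 - Real.sin φ^2))^2
        + (2*((N:ℝ)-1)*Real.sin φ + 2*Real.cos φ*Real.sin φ)^2) / (N:ℝ)^3 := by
  have hNr : (4:ℝ) ≤ (N:ℝ) := by exact_mod_cast hN
  have hN0 : (0:ℝ) < N := by linarith
  have hs : (0:ℝ) < Real.sqrt N := Real.sqrt_pos.mpr hN0
  have h1 : Real.sqrt (((N : ℝ) - 1) / N) = Real.sqrt ((N:ℝ)-1) / Real.sqrt N :=
    Real.sqrt_div (by linarith) _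
  have h2 : (Real.sqrt ((N:ℝ)-1) : ℂ) * (Real.sqrt ((N:ℝ)-1) : ℂ) = (N:ℂ) - 1 := by
    rw [← Complex.ofReal_mul, Real.mul_self_sqrt (by linarith)]
    push_cast; ring
  have hsC : ((Real.sqrt N : ℝ) : ℂ) ≠ 0 := by exact_mod_cast hs.ne'
  have hNC : (N:ℂ) ≠ 0 := by exact_mod_cast hN0.ne'
  have hz : (groverA N φ).mulVec
      ![((1 / Real.sqrt N : ℝ) : ℂ), ((Real.sqrt (((N : ℝ) - 1) / N) : ℝ) : ℂ)] 0
      = (((N:ℂ) - 1) - 2*((N:ℂ)-1)*Complex.exp (φ * Complex.I)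
          - Complex.exp (φ * Complex.I)^2) / ((N:ℂ) * (Real.sqrt N : ℂ)) := by
    simp only [groverA, Matrix.mulVec, dotProduct, Fin.sum_univ_two, Matrix.cons_val',
      Matrix.cons_val_zero, Matrix.cons_val_one, Matrix.head_cons, Matrix.empty_val',
      Matrix.cons_val_fin_one, Matrix.head_fin_const, Matrix.of_apply]
    rw [h1]
    push_cast
    field_simp
    linear_combination (1 - Complex.exp (φ * Complex.I)) * h2
  have he : Complex.exp (φ * Complex.I)
      = ((Real.cos φ : ℝ) : ℂ) + ((Real.sin φ : ℝ) : ℂ) * Complex.I := by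
    rw [Complex.exp_mul_I, Complex.ofReal_cos, Complex.ofReal_sin]
  have hnum : ((N:ℂ) - 1) - 2*((N:ℂ)-1)*Complex.exp (φ * Complex.I)
        - Complex.exp (φ * Complex.I)^2
      = (((((N:ℝ)-1) - 2*((N:ℝ)-1)*Real.cos φ - (Real.cos φ^2 - Real.sin φ^2)) : ℝ) : ℂ)
        + (((-(2*((N:ℝ)-1)*Real.sin φ + 2*Real.cos φ*Real.sin φ)) : ℝ) : ℂ) * Complex.I := by
    rw [he]; push_cast
    linear_combination (-(Complex.sin (φ:ℂ))^2) * Complex.I_sq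
  have hden : Complex.normSq ((N:ℂ) * (Real.sqrt N : ℂ)) = (N:ℝ)^3 := by
    rw [← Complex.ofReal_natCast, ← Complex.ofReal_mul, Complex.normSq_ofReal]
    have : Real.sqrt N * Real.sqrt N = (N:ℝ) := Real.mul_self_sqrt hN0.le
    nlinarith [this]
  rw [targetProb, hz, Complex.sq_norm, Complex.normSq_div, hnum,
    Complex.normSq_add_mul_I, hden]
  ring_nf

theorem stmt_1 (N : ℕ) (hN : 4 ≤ N)
    (v₀ : Fin 2 → ℂ)
    (hv : v₀ = ![((1 / Real.sqrt N : ℝ) : ℂ), ((Real.sqrt (((N : ℝ) - 1) / N) : ℝ) : ℂ)]) :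
    ∀ φ ∈ Set.Icc (-Real.pi) Real.pi,
      targetProb N φ v₀ ≤ targetProb N Real.pi v₀ := by
  intro φ _
  subst hv
  rw [targetProb_formula N hN φ, targetProb_formula N hN Real.pi]
  have hNr : (4:ℝ) ≤ (N:ℝ) := by exact_mod_cast hN
  have hN3 : (0:ℝ) < (N:ℝ)^3 := by positivity
  rw [div_le_div_iff_of_pos_right hN3]
  have hc1 : -1 ≤ Real.cos φ := Real.neg_one_le_cos φ
  have hc2 : Real.cos φ ≤ 1 := Real.cos_le_one φ
  have hsq : Real.sin φ ^ 2 + Real.cos φ ^ 2 = 1 := Real.sin_sq_add_cos_sq φ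
  rw [Real.cos_pi, Real.sin_pi]
  have hs2 : Real.sin φ ^ 2 = 1 - Real.cos φ ^ 2 := by linarith
  set c := Real.cos φ
  have key : ((N:ℝ) - 1 - 2 * ((N:ℝ) - 1) * (-1:ℝ) - ((-1:ℝ) ^ 2 - (0:ℝ) ^ 2)) ^ 2
        + (2 * ((N:ℝ) - 1) * 0 + 2 * (-1:ℝ) * 0) ^ 2
      - (((N:ℝ) - 1 - 2 * ((N:ℝ) - 1) * c - (c ^ 2 - Real.sin φ ^ 2)) ^ 2
        + (2 * ((N:ℝ) - 1) * Real.sin φ + 2 * c * Real.sin φ) ^ 2)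
      = 4 * ((N:ℝ)-1) * (1 + c) * ((N:ℝ) - 3 + c) := by
    linear_combination (-(2*((N:ℝ)-1 - 2*((N:ℝ)-1)*c - c^2) + Real.sin φ^2 + 1 - c^2
      + 4*((N:ℝ)-1+c)^2)) * hs2
  nlinarith [key, mul_nonneg (mul_nonneg (by linarith : (0:ℝ) ≤ 4*((N:ℝ)-1))
      (by linarith : (0:ℝ) ≤ 1 + c)) (by linarith : (0:ℝ) ≤ (N:ℝ) - 3 + c)]
end

section
/- Let N ≥ 2 be an integer, α, θ ∈ ℝ, and let v = (sin α · e^{iθ}, cos α) ∈ ℂ². Then for every φ ∈ ℝ, the one-step target probability satisfies |(A(φ)·v)₀|² = (2√(N−1)/N)·[ ( (√(N−1)/N)·cos(2α) + (1/N)·sin(2α)·cos(φ+θ) )·(1 − cos φ) − (1/2)·sin(2α)·cos(φ+θ) ] + (√(N−1)/N)·sin(2α)·cos θ + sin² α. -/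
open Real Complex Matrix

theorem stmt_2 (N : ℕ) (hN : 2 ≤ N) (α θ : ℝ)
    (v : Fin 2 → ℂ)
    (hv : v = ![(Real.sin α : ℂ) * Complex.exp (θ * Complex.I), (Real.cos α : ℂ)])
    (φ : ℝ) :
    targetProb N φ v =
      (2 * Real.sqrt ((N : ℝ) - 1) / N) *
        ((Real.sqrt ((N : ℝ) - 1) / N * Real.cos (2 * α)
            + (1 / (N : ℝ)) * Real.sin (2 * α) * Real.cos (φ + θ)) * (1 - Real.cos φ)
          - (1 / 2) * Real.sin (2 * α) * Real.cos (φ + θ))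
      + (Real.sqrt ((N : ℝ) - 1) / N) * Real.sin (2 * α) * Real.cos θ
      + Real.sin α ^ 2 := by
  have hN0 : (N : ℝ) ≠ 0 := by positivity
  have hs : Real.sqrt ((N : ℝ) - 1) ^ 2 = (N : ℝ) - 1 := by
    rw [Real.sq_sqrt]
    have : (2:ℝ) ≤ N := by exact_mod_cast hN
    linarith
  have hz : (groverA N φ).mulVec v 0 =
      Complex.exp (φ * Complex.I) * ((1 - Complex.exp (φ * Complex.I)) / (N : ℂ) - 1) *
        ((Real.sin α : ℂ) * Complex.exp (θ * Complex.I))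
      + ((Real.sqrt ((N : ℝ) - 1) : ℂ) / (N : ℂ)) * (1 - Complex.exp (φ * Complex.I)) *
        (Real.cos α : ℂ) := by
    simp [groverA, hv, Matrix.mulVec, dotProduct, Fin.sum_univ_two]
  rw [targetProb, hz, ← Complex.normSq_eq_norm_sq]
  rw [Complex.exp_mul_I, Complex.exp_mul_I]
  simp only [Complex.normSq_apply, Complex.add_re, Complex.add_im, Complex.mul_re,
    Complex.mul_im, Complex.sub_re, Complex.sub_im, Complex.div_re, Complex.div_im,
    Complex.one_re, Complex.one_im, Complex.ofReal_re, Complex.ofReal_im,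
    Complex.I_re, Complex.I_im, Complex.natCast_re, Complex.natCast_im,
    Complex.cos_ofReal_re, Complex.cos_ofReal_im, Complex.sin_ofReal_re, Complex.sin_ofReal_im,
    Complex.normSq_apply]
  rw [Real.cos_add, Real.sin_two_mul, Real.cos_two_mul]
  field_simp
  set n : ℝ := (N:ℝ) with hn
  have p1 : Real.sin φ ^ 2 + Real.cos φ ^ 2 = 1 := Real.sin_sq_add_cos_sq φ
  have p2 : Real.sin θ ^ 2 + Real.cos θ ^ 2 = 1 := Real.sin_sq_add_cos_sq θ
  have p3 : Real.sin α ^ 2 + Real.cos α ^ 2 = 1 := Real.sin_sq_add_cos_sq α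
  apply mul_left_cancel₀ (mul_ne_zero two_ne_zero (pow_ne_zero 13 hN0))
  linear_combination ((2) * Real.cos α ^ 2 * Real.sqrt (n - 1) ^ 2 * n ^ 17 + (4) * Real.cos θ * Real.sin α * Real.cos α * Real.sqrt (n - 1) * n ^ 18 + (4) * Real.cos θ ^ 2 * Real.sin α ^ 2 * n ^ 17 + (-4) * Real.cos θ ^ 2 * Real.sin α ^ 2 * n ^ 18 + (2) * Real.cos θ ^ 2 * Real.sin α ^ 2 * n ^ 19 + (4) * Real.sin θ ^ 2 * Real.sin α ^ 2 * n ^ 17 + (-4) * Real.sin θ ^ 2 * Real.sin α ^ 2 * n ^ 18 + (2) * Real.sin θ ^ 2 * Real.sin α ^ 2 * n ^ 19 + (4) * Real.cos φ * Real.cos θ * Real.sin α * Real.cos α * Real.sqrt (n - 1) * n ^ 17 + (-4) * Real.cos φ * Real.cos θ ^ 2 * Real.sin α ^ 2 * n ^ 17 + (4) * Real.cos φ * Real.cos θ ^ 2 * Real.sin α ^ 2 * n ^ 18 + (-4) * Real.cos φ * Real.sin θ ^ 2 * Real.sin α ^ 2 * n ^ 17 + (4) * Real.cos φ * Real.sin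 θ ^ 2 * Real.sin α ^ 2 * n ^ 18 + (2) * Real.cos φ ^ 2 * Real.cos θ ^ 2 * Real.sin α ^ 2 * n ^ 17 + (2) * Real.cos φ ^ 2 * Real.sin θ ^ 2 * Real.sin α ^ 2 * n ^ 17 + (-4) * Real.sin φ * Real.sin θ * Real.sin α * Real.cos α * Real.sqrt (n - 1) * n ^ 17 + (2) * Real.sin φ ^ 2 * Real.cos θ ^ 2 * Real.sin α ^ 2 * n ^ 17 + (2) * Real.sin φ ^ 2 * Real.sin θ ^ 2 * Real.sin α ^ 2 * n ^ 17) * p1 + ((4) * Real.sin α ^ 2 * n ^ 17 + (-4) * Real.sin α ^ 2 * n ^ 18 + (2) * Real.sin α ^ 2 * n ^ 19 + (-4) * Real.cos φ * Real.sin α ^ 2 * n ^ 17 + (4) * Real.cos φ * Real.sin α ^ 2 * n ^ 18) * p2 + ((4) * n ^ 17 + (-4) * n ^ 18 + (-4) * Real.cos φ * n ^ 17 + (4) * Real.cos φ * n ^ 18) * p3 + ((4) * n ^ 17 + (-4) * Real.cos α ^ 2 * n ^ 17 + (-4) * Real.cos φ * n ^ 17 + (4) * Real.cos φ * Real.cos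 α ^ 2 * n ^ 17) * hs
end

section
/- Let N ≥ 2 be an integer, α, θ ∈ ℝ, let v = (sin α · e^{iθ}, cos α) ∈ ℂ², and define g(φ) = ( (√(N−1)/N)·cos(2α) + (1/N)·sin(2α)·cos(φ+θ) )·(1 − cos φ) − (1/2)·sin(2α)·cos(φ+θ). Then for any φ* ∈ [−π, π], φ* maximizes the one-step target probability P(φ) = |(A(φ)·v)₀|² over φ ∈ [−π, π] if and only if φ* maximizes g over [−π, π]. -/
set_option maxHeartbeats 1000000

open Real Complex Matrix

lemma targetProb_eq (N : ℕ) (hN : 2 ≤ N) (α θ φ : ℝ) :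
    targetProb N φ ![(Real.sin α : ℂ) * Complex.exp (θ * Complex.I), (Real.cos α : ℂ)]
    = (Real.sin α ^ 2 + Real.sqrt ((N:ℝ)-1) / N * Real.sin (2*α) * Real.cos θ)
      + (2 * Real.sqrt ((N:ℝ)-1) / N) *
      ((Real.sqrt ((N : ℝ) - 1) / N * Real.cos (2 * α)
          + (1 / (N : ℝ)) * Real.sin (2 * α) * Real.cos (φ + θ)) * (1 - Real.cos φ)
        - (1 / 2) * Real.sin (2 * α) * Real.cos (φ + θ)) := by
  have hn0 : (N:ℝ) ≠ 0 := by positivity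
  have hr : Real.sqrt ((N:ℝ)-1) ^ 2 = (N:ℝ) - 1 := Real.sq_sqrt (by
    have : (2:ℝ) ≤ N := by exact_mod_cast hN
    linarith)
  have e0 : (groverA N φ).mulVec ![(Real.sin α : ℂ) * Complex.exp (θ * Complex.I), (Real.cos α : ℂ)] 0
      = Complex.exp (φ * Complex.I) * ((1 - Complex.exp (φ * Complex.I)) / (N : ℂ) - 1)
          * ((Real.sin α : ℂ) * Complex.exp (θ * Complex.I))
        + ((Real.sqrt ((N : ℝ) - 1) : ℂ) / (N : ℂ)) * (1 - Complex.exp (φ * Complex.I))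
          * (Real.cos α : ℂ) := by
    simp [groverA, Matrix.mulVec, dotProduct, Fin.sum_univ_two]
  rw [targetProb, Complex.sq_norm, e0]
  rw [Complex.exp_mul_I, Complex.exp_mul_I]
  rw [show ((N:ℂ)) = ((N:ℝ):ℂ) by push_cast; ring]
  simp only [← Complex.ofReal_cos, ← Complex.ofReal_sin]
  rw [Complex.normSq_apply]
  simp only [Complex.add_re, Complex.add_im, Complex.mul_re, Complex.mul_im,
    Complex.sub_re, Complex.sub_im, Complex.div_re, Complex.div_im, Complex.one_re,
    Complex.one_im, Complex.ofReal_re, Complex.ofReal_im, Complex.I_re, Complex.I_im,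
    Complex.normSq_ofReal, Complex.neg_re, Complex.neg_im]
  rw [Real.cos_add φ θ, Real.sin_two_mul, Real.cos_two_mul]
  have hsa := Real.sin_sq_add_cos_sq α
  have hsp := Real.sin_sq_add_cos_sq φ
  have hst := Real.sin_sq_add_cos_sq θ
  field_simp
  linear_combination ((-1)*(((N:ℝ)))^4 + (-2)*(Real.cos φ)*(Real.cos θ)^2*(((N:ℝ)))^2 + (2)*(Real.cos φ)*(Real.cos θ)^2*(((N:ℝ)))^3 + (-2)*(Real.cos φ)*(Real.sin θ)^2*(((N:ℝ)))^2 + (2)*(Real.cos φ)*(Real.sin θ)^2*(((N:ℝ)))^3 + (2)*(Real.sin θ)^2*(((N:ℝ)))^2 + (-2)*(Real.sin θ)^2*(((N:ℝ)))^3 + (1)*(Real.sin θ)^2*(((N:ℝ)))^4 + (2)*(Real.cos θ)^2*(((N:ℝ)))^2 + (-2)*(Real.cos θ)^2*(((N:ℝ)))^3 + (1)*(Real.cos θ)^2*(((N:ℝ)))^4) * hsa + ((-2)*(Real.cos φ)*(Real.sin α)^2*(Real.cos θ)^2*(((N:ℝ)))^2 + (1)*(Real.cos φ)^2*(Real.sin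 α)^2*(Real.cos θ)^2*(((N:ℝ)))^2 + (2)*(Real.cos φ)*(Real.sin α)^2*(Real.cos θ)^2*(((N:ℝ)))^3 + (1)*(Real.sin φ)^2*(Real.sin α)^2*(Real.cos θ)^2*(((N:ℝ)))^2 + (2)*(Real.cos φ)*(Real.sin α)*(Real.cos α)*(Real.cos θ)*(Real.sqrt ((N:ℝ)-1))*(((N:ℝ)))^2 + (1)*(Real.cos φ)^2*(Real.sin α)^2*(Real.sin θ)^2*(((N:ℝ)))^2 + (-2)*(Real.cos φ)*(Real.sin α)^2*(Real.sin θ)^2*(((N:ℝ)))^2 + (2)*(Real.cos φ)*(Real.sin α)^2*(Real.sin θ)^2*(((N:ℝ)))^3 + (2)*(Real.sin α)^2*(Real.sin θ)^2*(((N:ℝ)))^2 + (-2)*(Real.sin α)^2*(Real.sin θ)^2*(((N:ℝ)))^3 + (1)*(Real.sin α)^2*(Real.sin θ)^2*(((N:ℝ)))^4 + (1)*(Real.sin φ)^2*(Real.sin α)^2*(Real.sin θ)^2*(((N:ℝ)))^2 + (-2)*(Real.sin φ)*(Real.sin α)*(Real.cos α)*(Real.sin θ)*(Real.sqrt ((N:ℝ)-1))*(((N:ℝ)))^2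 + (2)*(Real.sin α)^2*(Real.cos θ)^2*(((N:ℝ)))^2 + (-2)*(Real.sin α)^2*(Real.cos θ)^2*(((N:ℝ)))^3 + (1)*(Real.sin α)^2*(Real.cos θ)^2*(((N:ℝ)))^4 + (2)*(Real.sin α)*(Real.cos α)*(Real.cos θ)*(Real.sqrt ((N:ℝ)-1))*(((N:ℝ)))^3 + (1)*(Real.cos α)^2*(Real.sqrt ((N:ℝ)-1))^2*(((N:ℝ)))^2) * hsp + ((-2)*(Real.cos α)^2*(((N:ℝ)))^2 + (2)*(Real.cos φ)*(Real.cos α)^2*(((N:ℝ)))^2 + (2)*(((N:ℝ)))^2 + (-2)*(Real.cos φ)*(((N:ℝ)))^2) * hr + ((-2)*(Real.cos φ)*(((N:ℝ)))^2 + (2)*(Real.cos φ)*(Real.cos α)^2*(((N:ℝ)))^2 + (2)*(Real.cos φ)*(((N:ℝ)))^3 + (-2)*(Real.cos φ)*(Real.cos α)^2*(((N:ℝ)))^3 + (2)*(((N:ℝ)))^2 + (-2)*(Real.cos α)^2*(((N:ℝ)))^2 + (-2)*(((N:ℝ)))^3 + (2)*(Real.cos α)^2*(((N:ℝ)))^3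 + (1)*(((N:ℝ)))^4 + (-1)*(Real.cos α)^2*(((N:ℝ)))^4) * hst

theorem stmt_3 (N : ℕ) (hN : 2 ≤ N) (α θ : ℝ)
    (v : Fin 2 → ℂ)
    (hv : v = ![(Real.sin α : ℂ) * Complex.exp (θ * Complex.I), (Real.cos α : ℂ)])
    (g : ℝ → ℝ)
    (hg : g = fun φ =>
      (Real.sqrt ((N : ℝ) - 1) / N * Real.cos (2 * α)
          + (1 / (N : ℝ)) * Real.sin (2 * α) * Real.cos (φ + θ)) * (1 - Real.cos φ)
        - (1 / 2) * Real.sin (2 * α) * Real.cos (φ + θ))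
    (φstar : ℝ) (hφstar : φstar ∈ Set.Icc (-Real.pi) Real.pi) :
    (∀ φ ∈ Set.Icc (-Real.pi) Real.pi, targetProb N φ v ≤ targetProb N φstar v) ↔
      (∀ φ ∈ Set.Icc (-Real.pi) Real.pi, g φ ≤ g φstar) := by
  have hb : 0 < 2 * Real.sqrt ((N:ℝ)-1) / N := by
    have h1 : (0:ℝ) < Real.sqrt ((N:ℝ)-1) := Real.sqrt_pos.mpr (by
      have : (2:ℝ) ≤ N := by exact_mod_cast hN
      linarith)
    have h2 : (0:ℝ) < N := by positivity
    positivity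
  have key : ∀ φ : ℝ, targetProb N φ v
      = (Real.sin α ^ 2 + Real.sqrt ((N:ℝ)-1) / N * Real.sin (2*α) * Real.cos θ)
        + (2 * Real.sqrt ((N:ℝ)-1) / N) * g φ := by
    intro φ
    rw [hv, hg, targetProb_eq N hN α θ φ]
  constructor
  · intro h φ hφ
    have := h φ hφ
    rw [key φ, key φstar] at this
    have := sub_nonneg.mpr this
    nlinarith [this, hb]
  · intro h φ hφ
    have := h φ hφ
    rw [key φ, key φstar]
    nlinarith [this, hb]
end

section
/- Let N ≥ 2 be an integer, α ∈ ℝ, and let v = (sin α, cos α) ∈ ℂ² be a real amplitude vector. Let β ∈ (0, π/2) satisfy sin β = 1/√N and cos β = √((N−1)/N), and set A = sin²β·sin α − sin β·cos β·cos α, B = sin α·cos²β + cos α·sin β·cos β, C = sin²β·sin α + sin β·cos β·cos α. Then for every φ ∈ ℝ, the one-step target probability satisfies |(A(φ)·v)₀|² = (A² − C²)·cos²φ + 2AB·cos φ + B² + C². -/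
open Real Complex Matrix

theorem stmt_7 (N : ℕ) (hN : 2 ≤ N) (α : ℝ)
    (v : Fin 2 → ℂ) (hv : v = ![(Real.sin α : ℂ), (Real.cos α : ℂ)])
    (β : ℝ) (hβ : β ∈ Set.Ioo 0 (Real.pi / 2))
    (hsin : Real.sin β = 1 / Real.sqrt N)
    (hcos : Real.cos β = Real.sqrt (((N : ℝ) - 1) / N))
    (A B C : ℝ)
    (hA : A = Real.sin β ^ 2 * Real.sin α - Real.sin β * Real.cos β * Real.cos α)
    (hB : B = Real.sin α * Real.cos β ^ 2 + Real.cos α * Real.sin β * Real.cos β)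
    (hC : C = Real.sin β ^ 2 * Real.sin α + Real.sin β * Real.cos β * Real.cos α)
    (φ : ℝ) :
    targetProb N φ v =
      (A ^ 2 - C ^ 2) * Real.cos φ ^ 2 + 2 * A * B * Real.cos φ + B ^ 2 + C ^ 2 := by
  have hN0 : (0:ℝ) < (N:ℝ) := by
    have : (0:ℕ) < N := by omega
    exact_mod_cast this
  have hN1 : (0:ℝ) ≤ (N:ℝ) - 1 := by
    have : (1:ℕ) ≤ N := by omega
    have : (1:ℝ) ≤ (N:ℝ) := by exact_mod_cast this
    linarith
  have hsq : Real.sqrt N * Real.sqrt N = (N:ℝ) := Real.mul_self_sqrt hN0.le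
  have hsn : Real.sqrt N ≠ 0 := by positivity
  have hNne : (N:ℝ) ≠ 0 := hN0.ne'
  have hs2 : Real.sin β ^ 2 = 1 / (N:ℝ) := by
    rw [hsin, div_pow, one_pow, Real.sq_sqrt hN0.le]
  have hsc : Real.sin β * Real.cos β = Real.sqrt ((N:ℝ) - 1) / N := by
    rw [hsin, hcos, Real.sqrt_div hN1]
    field_simp
    first
    | linear_combination (-Real.sqrt ((N:ℝ)-1)) * hsq
    | skip
  have hNc : (N:ℂ) ≠ 0 := by exact_mod_cast hNne
  have h1 : (1:ℂ)/(N:ℂ) = ((Real.sin β ^ 2 : ℝ) : ℂ) := by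
    rw [hs2]
    first
    | (push_cast; ring)
    | push_cast
  have h2 : ((Real.sqrt ((N:ℝ)-1) : ℝ) : ℂ)/(N:ℂ) = ((Real.sin β * Real.cos β : ℝ) : ℂ) := by
    rw [hsc]
    first
    | (push_cast; ring)
    | push_cast
  have hz : (groverA N φ).mulVec v 0 =
      (Complex.exp (φ*Complex.I) * (((Real.sin β ^ 2 : ℝ):ℂ)*(1 - Complex.exp (φ*Complex.I)) - 1))
          * ((Real.sin α : ℝ):ℂ)
        + ((Real.sin β * Real.cos β : ℝ):ℂ) * (1 - Complex.exp (φ*Complex.I))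
          * ((Real.cos α : ℝ):ℂ) := by
    rw [hv]
    simp only [groverA, Matrix.mulVec, dotProduct, Fin.sum_univ_two, Matrix.cons_val',
      Matrix.cons_val_zero, Matrix.cons_val_one, Matrix.head_cons, Matrix.of_apply,
      Matrix.empty_val', Matrix.cons_val_fin_one, Matrix.head_fin_const]
    linear_combination (Complex.exp (↑φ*Complex.I) * (1 - Complex.exp (↑φ*Complex.I))
        * ((Real.sin α : ℝ):ℂ)) * h1
      + ((1 - Complex.exp (↑φ*Complex.I)) * ((Real.cos α : ℝ):ℂ)) * h2
  rw [targetProb, hz, Complex.exp_mul_I, ← Complex.ofReal_cos, ← Complex.ofReal_sin,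
    Complex.sq_norm, Complex.normSq_apply]
  simp only [Complex.add_re, Complex.add_im, Complex.mul_re, Complex.mul_im,
    Complex.sub_re, Complex.sub_im, Complex.ofReal_re, Complex.ofReal_im,
    Complex.I_re, Complex.I_im, Complex.one_re, Complex.one_im]
  subst hA hB hC
  have hp1 : Real.sin β ^ 2 + Real.cos β ^ 2 = 1 := Real.sin_sq_add_cos_sq β
  have hp2 : Real.sin φ ^ 2 + Real.cos φ ^ 2 = 1 := Real.sin_sq_add_cos_sq φ
  set s := Real.sin β
  set c := Real.cos β
  set sa := Real.sin α
  set ca := Real.cos α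
  set e := Real.cos φ
  set f := Real.sin φ
  linear_combination
    (-sa^2 - c^2*sa^2 - 2*s*c*sa*ca + 2*s*c*sa*ca*e - s^2*ca^2 + s^2*ca^2*f^2
      + s^2*ca^2*e^2 + s^2*sa^2 - 2*s^2*sa^2*e) * hp1 +
    (sa^2 + 2*s*c*sa*ca + s^2*ca^2 - 2*s^2*sa^2 + 2*s^2*sa^2*e + 2*s^3*c*sa*ca*e
      - s^4*ca^2 + 2*s^4*sa^2 + s^4*sa^2*f^2 - 2*s^4*sa^2*e + s^4*sa^2*e^2) * hp2
end

section
/- Let N ≥ 2 be an integer, let arccot denote the inverse cotangent with range (0, π), and suppose α ∈ ℝ satisfies 0 < α ≤ (1/2)·arccot( (−N+6)/(2√(N−1)) ). Let v = (sin α, cos α) ∈ ℂ². Then for every φ ∈ [−π, π], the one-step target probability satisfies |(A(φ)·v)₀|² ≤ |(A(π)·v)₀|²; that is, the classical Grover phase change φ = π is optimal in the region R₁. -/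
open Real Complex Matrix

/-- The inverse cotangent with range `(0, π)`. -/
noncomputable def arccot (x : ℝ) : ℝ := Real.pi / 2 - Real.arctan x

lemma grover_key (N : ℕ) (hN : 2 ≤ N) (α φ : ℝ) :
    targetProb N φ ![(Real.sin α : ℂ), (Real.cos α : ℂ)] * (N:ℝ)^2 =
      Real.sin α ^ 2 * (((N:ℝ)-1)^2 + 1 + 2*((N:ℝ)-1)*Real.cos φ)
      + 2*((N:ℝ)-1)*Real.cos α ^2 * (1 - Real.cos φ)
      + 2*Real.sin α*Real.cos α*Real.sqrt ((N:ℝ)-1)*(1-Real.cos φ)*((N:ℝ)+2*Real.cos φ) := by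
  have hN0 : (N:ℝ) ≠ 0 := by positivity
  have h1 : Real.sin φ ^2 + Real.cos φ ^2 = 1 := Real.sin_sq_add_cos_sq φ
  rw [targetProb, Complex.sq_norm, Complex.normSq_apply]
  simp [groverA, mulVec, dotProduct, Fin.sum_univ_two, Complex.exp_mul_I,
    Complex.cos_ofReal_re, Complex.sin_ofReal_re]
  have hr' : Real.sqrt (-1 + (N:ℝ)) ^ 2 = -1 + (N:ℝ) := Real.sq_sqrt (by
    have : (2:ℝ) ≤ N := by exact_mod_cast hN
    linarith)
  have h2 : Real.sin φ ^ 2 = 1 - Real.cos φ ^2 := by linarith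
  have h4 : Real.sin φ ^ 4 = (1 - Real.cos φ ^2)^2 := by
    rw [show (4:ℕ) = 2*2 from rfl, pow_mul, h2]
  ring_nf
  rw [hr', h2, h4]
  field_simp
  ring

lemma cot_ineq (t β : ℝ) (hβ0 : 0 < β) (hβ : β ≤ Real.pi/2 - Real.arctan t) :
    t * Real.sin β ≤ Real.cos β := by
  set θ := Real.arctan t with hθ
  have hc : 0 < Real.cos θ := Real.cos_arctan_pos t
  have ht : Real.tan θ = t := Real.tan_arctan t
  have hθlb : -(Real.pi/2) < θ := Real.neg_pi_div_two_lt_arctan t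
  have hcos : 0 ≤ Real.cos (β + θ) := by
    apply Real.cos_nonneg_of_mem_Icc
    constructor <;> [nlinarith [Real.pi_pos]; linarith]
  rw [Real.cos_add] at hcos
  have : t * Real.sin β = Real.sin θ * Real.sin β / Real.cos θ := by
    rw [← ht, Real.tan_eq_sin_div_cos]; ring
  rw [this, div_le_iff₀ hc]
  nlinarith

theorem stmt_12 (N : ℕ) (hN : 2 ≤ N) (α : ℝ)
    (hα : 0 < α ∧ α ≤ (1 / 2) * arccot ((-(N : ℝ) + 6) / (2 * Real.sqrt ((N : ℝ) - 1))))
    (v : Fin 2 → ℂ) (hv : v = ![(Real.sin α : ℂ), (Real.cos α : ℂ)]) :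
    ∀ φ ∈ Set.Icc (-Real.pi) Real.pi,
      targetProb N φ v ≤ targetProb N Real.pi v := by
  intro φ hφ
  subst hv
  obtain ⟨hα0, hα1⟩ := hα
  set t : ℝ := (-(N : ℝ) + 6) / (2 * Real.sqrt ((N : ℝ) - 1)) with htdef
  set s := Real.sin α with hsdef
  set c := Real.cos α with hcdef
  set r := Real.sqrt ((N:ℝ) - 1) with hrdef
  have hN2 : (2:ℝ) ≤ (N:ℝ) := by exact_mod_cast hN
  have hr2 : r ^ 2 = (N:ℝ) - 1 := Real.sq_sqrt (by linarith)
  have hrpos : 0 < r := Real.sqrt_pos.mpr (by linarith)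
  -- bounds on α
  have harctan : -(Real.pi/2) < Real.arctan t := Real.neg_pi_div_two_lt_arctan t
  have hαlt : α < Real.pi / 2 := by
    rw [arccot] at hα1; linarith
  have hs0 : 0 < s := Real.sin_pos_of_pos_of_lt_pi hα0 (by linarith [Real.pi_pos])
  have hc0 : 0 < c := Real.cos_pos_of_mem_Ioo ⟨by linarith, hαlt⟩
  -- the cotangent condition
  have h2α : (2:ℝ) * α ≤ Real.pi/2 - Real.arctan t := by
    rw [arccot] at hα1; linarith
  have hcot : t * Real.sin (2*α) ≤ Real.cos (2*α) := cot_ineq t (2*α) (by linarith) h2α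
  rw [Real.sin_two_mul, Real.cos_two_mul'] at hcot
  rw [← hsdef, ← hcdef] at hcot
  -- key inequality: s*c*r*(6-N) ≤ (N-1)*(c^2-s^2)
  have hkey : s * c * r * (6 - (N:ℝ)) ≤ ((N:ℝ)-1) * (c^2 - s^2) := by
    have h := mul_le_mul_of_nonneg_right hcot (le_of_lt (by positivity : (0:ℝ) < r^2))
    rw [htdef] at h
    have h2r : (2:ℝ) * r ≠ 0 := by positivity
    calc s * c * r * (6 - (N:ℝ)) = (-(N:ℝ) + 6) / (2 * r) * (2 * s * c) * r ^ 2 := by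
          field_simp; ring
      _ ≤ (c^2 - s^2) * r^2 := h
      _ = ((N:ℝ)-1) * (c^2 - s^2) := by rw [hr2]; ring
  -- reduce to the quadratic in cos φ
  have hk1 := grover_key N hN α φ
  have hk2 := grover_key N hN α Real.pi
  rw [Real.cos_pi] at hk2
  have hx1 : -1 ≤ Real.cos φ := Real.neg_one_le_cos φ
  have hx2 : Real.cos φ ≤ 1 := Real.cos_le_one φ
  have hNsq : (0:ℝ) < (N:ℝ)^2 := by positivity
  have hmul : targetProb N φ ![(s : ℂ), (c : ℂ)] * (N:ℝ)^2 ≤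
      targetProb N Real.pi ![(s : ℂ), (c : ℂ)] * (N:ℝ)^2 := by
    rw [hk1, hk2]
    nlinarith [mul_nonneg (by linarith : (0:ℝ) ≤ 1 + Real.cos φ)
        (by linarith : (0:ℝ) ≤ ((N:ℝ)-1) * (c^2 - s^2) - s * c * r * (6 - (N:ℝ))),
      mul_nonneg (by positivity : (0:ℝ) ≤ s * c * r)
        (sq_nonneg (1 + Real.cos φ))]
  exact le_of_mul_le_mul_right hmul hNsq
end

section
/- Let N ≥ 2 be an integer, let arccot denote the inverse cotangent with range (0, π), and suppose α ∈ ℝ satisfies (1/2)·arccot( (−N+6)/(2√(N−1)) ) < α < (1/2)·arccot( (−N−2)/(2√(N−1)) ). Let v = (sin α, cos α) ∈ ℂ² and set φ_max = arccos( (1/4)·( −N + 2 − 2√(N−1)·(cos(2α)/sin(2α)) ) ). Then for every φ ∈ [−π, π], the one-step target probability satisfies |(A(φ)·v)₀|² ≤ |(A(φ_max)·v)₀|²; that is, φ_max is the optimal phase change in the region R₂. -/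
open Real Complex Matrix

lemma key (N : ℕ) (hN : 0 < N) (s c φ : ℝ) :
    targetProb N φ ![(s:ℂ),(c:ℂ)] =
      ((1 - Real.cos φ)*(s - Real.sqrt ((N:ℝ)-1)*c)/N - s)^2
      + (Real.sin φ)^2*(s + Real.sqrt ((N:ℝ)-1)*c)^2/N^2 := by
  have hN0 : ((N:ℝ)) ≠ 0 := Nat.cast_ne_zero.mpr hN.ne'
  have hN0' : ((N:ℂ)) ≠ 0 := Nat.cast_ne_zero.mpr hN.ne'
  set m : ℝ := Real.sqrt ((N:ℝ)-1) with hm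
  set x := Real.cos φ
  set y := Real.sin φ
  have hpy : (x:ℂ)^2 + (y:ℂ)^2 = 1 := by
    have h := Real.cos_sq_add_sin_sq φ
    exact_mod_cast congrArg (Complex.ofReal) h
  have he : Complex.exp (φ * Complex.I) = (x:ℂ) + (y:ℂ) * Complex.I := by
    rw [Complex.exp_mul_I, ← Complex.ofReal_cos, ← Complex.ofReal_sin]
  set X := (1 - x)*(s - m*c)/N - s with hX
  set Y := -(y*(s + m*c)/N) with hY
  have habs : ‖(groverA N φ).mulVec ![(s:ℂ),(c:ℂ)] 0‖
      = ‖(X:ℂ) + (Y:ℂ)*Complex.I‖ := by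
    have h1 : ‖(groverA N φ).mulVec ![(s:ℂ),(c:ℂ)] 0‖
        = ‖((groverA N φ).mulVec ![(s:ℂ),(c:ℂ)] 0) *
            (starRingEnd ℂ) (Complex.exp (φ * Complex.I))‖ := by
      rw [norm_mul, Complex.norm_conj, Complex.norm_exp_ofReal_mul_I, mul_one]
    rw [h1]
    congr 1
    simp only [groverA, Matrix.mulVec, dotProduct, Fin.sum_univ_two,
      Matrix.cons_val', Matrix.cons_val_zero, Matrix.cons_val_one, Matrix.head_cons,
      Matrix.empty_val', Matrix.cons_val_fin_one, Matrix.head_fin_const,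
      Matrix.of_apply, Matrix.cons_val_zero]
    rw [he, hX, hY]
    simp only [map_add, _root_.map_mul, Complex.conj_I, Complex.conj_ofReal]
    push_cast
    have he' : ((x:ℂ) + (y:ℂ)*Complex.I) * ((x:ℂ) - (y:ℂ)*Complex.I) = 1 := by
      linear_combination hpy - (y:ℂ)^2 * Complex.I_sq
    linear_combination (-((((x:ℂ) + (y:ℂ)*Complex.I)) * s + (m:ℂ) * c)/(N:ℂ) - (s:ℂ) + (s:ℂ)/(N:ℂ)) * he'
  rw [targetProb, habs, Complex.norm_add_mul_I, Real.sq_sqrt (by positivity), hY]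
  ring


set_option maxHeartbeats 1000000 in
theorem stmt_14 (N : ℕ) (hN : 2 ≤ N) (α : ℝ)
    (hα : (1 / 2) * arccot ((-(N : ℝ) + 6) / (2 * Real.sqrt ((N : ℝ) - 1))) < α ∧
      α < (1 / 2) * arccot ((-(N : ℝ) - 2) / (2 * Real.sqrt ((N : ℝ) - 1))))
    (v : Fin 2 → ℂ) (hv : v = ![(Real.sin α : ℂ), (Real.cos α : ℂ)])
    (φmax : ℝ)
    (hφmax : φmax = Real.arccos ((1 / 4) * (-(N : ℝ) + 2
      - 2 * Real.sqrt ((N : ℝ) - 1) * (Real.cos (2 * α) / Real.sin (2 * α))))) :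
    ∀ φ ∈ Set.Icc (-Real.pi) Real.pi,
      targetProb N φ v ≤ targetProb N φmax v := by
  intro φ _
  subst hv
  have hn2 : (2:ℝ) ≤ (N:ℝ) := by exact_mod_cast hN
  set n : ℝ := (N:ℝ) with hn
  set m : ℝ := Real.sqrt (n - 1) with hmdef
  have hm2 : m^2 = n - 1 := Real.sq_sqrt (by linarith)
  have hm0 : 0 < m := Real.sqrt_pos.mpr (by linarith)
  set q₁ : ℝ := (-n + 6) / (2 * m) with hq1
  set q₂ : ℝ := (-n - 2) / (2 * m) with hq2
  obtain ⟨ha1, ha2⟩ := hα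
  have hθ1 : arccot q₁ < 2 * α := by rw [arccot]; unfold arccot at ha1; linarith
  have hθ2 : 2 * α < arccot q₂ := by rw [arccot]; unfold arccot at ha2; linarith
  have harctan1 := Real.arctan_lt_pi_div_two q₁
  have harctan1' := Real.neg_pi_div_two_lt_arctan q₁
  have harctan2 := Real.arctan_lt_pi_div_two q₂
  have harctan2' := Real.neg_pi_div_two_lt_arctan q₂
  rw [arccot] at hθ1 hθ2
  have h2α_pos : 0 < 2 * α := by linarith
  have h2α_lt : 2 * α < π := by linarith
  have hs2 : 0 < Real.sin (2 * α) := Real.sin_pos_of_pos_of_lt_pi h2α_pos h2α_lt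
  set t : ℝ := Real.cos (2 * α) / Real.sin (2 * α) with htdef
  have htan : Real.tan (π / 2 - 2 * α) = t := by
    rw [Real.tan_pi_div_two_sub, Real.tan_eq_sin_div_cos, inv_div]
  have harc : Real.arctan t = π / 2 - 2 * α := by
    rw [← htan, Real.arctan_tan (by linarith) (by linarith)]
  have ht1 : t < q₁ := by
    have : Real.arctan t < Real.arctan q₁ := by rw [harc]; linarith
    exact Real.arctan_strictMono.lt_iff_lt.mp this
  have ht2 : q₂ < t := by
    have : Real.arctan q₂ < Real.arctan t := by rw [harc]; linarith
    exact Real.arctan_strictMono.lt_iff_lt.mp this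
  set s : ℝ := Real.sin α with hsdef
  set c : ℝ := Real.cos α with hcdef
  have hs : 0 < s := Real.sin_pos_of_pos_of_lt_pi (by linarith) (by nlinarith [Real.pi_pos])
  have hc : 0 < c := Real.cos_pos_of_mem_Ioo ⟨by nlinarith [Real.pi_pos], by linarith⟩
  set xstar : ℝ := (1 / 4) * (-n + 2 - 2 * m * t) with hxsdef
  have ht1' : 2 * m * t < -n + 6 := by
    have h := (lt_div_iff₀ (by positivity : (0:ℝ) < 2 * m)).mp ht1
    nlinarith
  have ht2' : -n - 2 < 2 * m * t := by
    have h := (div_lt_iff₀ (by positivity : (0:ℝ) < 2 * m)).mp ht2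
    nlinarith
  have hx1 : -1 ≤ xstar := by rw [hxsdef]; linarith
  have hx2 : xstar ≤ 1 := by rw [hxsdef]; linarith
  have hcosmax : Real.cos φmax = xstar := by
    rw [hφmax]; exact Real.cos_arccos hx1 hx2
  have hpy : s^2 + c^2 = 1 := Real.sin_sq_add_cos_sq α
  have hc2 : Real.cos (2 * α) = c^2 - s^2 := by
    rw [Real.cos_two_mul]; linarith
  have hsin2 : Real.sin (2 * α) = 2 * s * c := Real.sin_two_mul α
  have hn' : n = m^2 + 1 := by linarith
  have hN0 : (0:ℝ) < n := by linarith
  -- the probability as a function of cos ψ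
  have hP : ∀ ψ : ℝ, targetProb N ψ ![(s:ℂ),(c:ℂ)] =
      ((1 - Real.cos ψ)*(s - m*c)/n - s)^2 + (1 - (Real.cos ψ)^2)*(s + m*c)^2/n^2 := by
    intro ψ
    rw [key N (by omega) s c ψ]
    have hsq : (Real.sin ψ)^2 = 1 - (Real.cos ψ)^2 := by
      have := Real.sin_sq_add_cos_sq ψ; linarith
    rw [hsq]
  rw [hP φ, hP φmax, hcosmax]
  -- xstar is the vertex
  have hxs : xstar = (s - m*c)*(s*m + c)/(4*s*c) := by
    rw [hxsdef, htdef, hc2, hsin2, hn']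
    field_simp
    ring
  set x := Real.cos φ
  have hdiff : ((1 - xstar)*(s - m*c)/n - s)^2 + (1 - xstar^2)*(s + m*c)^2/n^2
      - (((1 - x)*(s - m*c)/n - s)^2 + (1 - x^2)*(s + m*c)^2/n^2)
      = (4*s*m*c/n^2) * (x - xstar)^2 := by
    rw [hxs, hn']
    field_simp
    ring
  have hpos : 0 ≤ (4*s*m*c/n^2) * (x - xstar)^2 := by positivity
  linarith [hdiff, hpos]
end

section
/- Let N ≥ 2 be an integer, let α ∈ (0, π/2), and suppose sin²α ≤ (1/2)·( 1 + (N−6)/√(N² − 8N + 32) ). Let v = (sin α, cos α) ∈ ℂ². Then for every φ ∈ [−π, π], the one-step target probability satisfies |(A(φ)·v)₀|² ≤ |(A(π)·v)₀|²; that is, the classical Grover phase change φ = π remains optimal as long as the target probability sin²α has not exceeded the threshold P_r(N) = (1/2)·( 1 + (N−6)/√(N² − 8N + 32) ). -/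
open Real Complex Matrix

/-- Key real inequality: if `√D·C + m ≥ 0` with `D = 4k² + m²` then `2kC + mS ≥ 0`. -/
lemma grover_key_s16 (k m r C S : ℝ) (hk : 0 ≤ k) (hr : 0 ≤ r) (hr2 : r^2 = 4*k^2+m^2)
    (hCS : C^2+S^2 = 1) (hS : 0 ≤ S) (h : 0 ≤ r*C+m) : 0 ≤ 2*k*C + m*S := by
  rcases le_or_gt 0 C with hC | hC
  · rcases le_or_gt 0 m with hm | hm
    · positivity
    · have h1 : m^2 ≤ r^2*C^2 := by nlinarith [mul_nonneg hr hC]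
      have h2 : m^2*S^2 ≤ (2*k*C)^2 := by nlinarith [mul_nonneg (sq_nonneg m) (sq_nonneg C)]
      nlinarith [mul_nonneg hk hC]
  · have hm : 0 ≤ m := by nlinarith [mul_nonneg hr (neg_nonneg.2 hC.le)]
    have h1 : r^2*C^2 ≤ m^2 := by nlinarith [mul_nonneg hr (neg_nonneg.2 hC.le)]
    have h2 : (2*k*C)^2 ≤ m^2*S^2 := by nlinarith [mul_nonneg (sq_nonneg m) (sq_nonneg C)]
    nlinarith [mul_nonneg hm hS]

/-- Explicit real formula for `N² · targetProb`, in terms of `cos ψ` only. -/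
lemma grover_formula (N : ℕ) (hN : 2 ≤ N) (s c : ℝ) (ψ : ℝ) :
    (N:ℝ)^2 * targetProb N ψ ![(s:ℂ), (c:ℂ)] =
      ((Real.cos ψ + 1 - 2*Real.cos ψ^2)*s - N*s*Real.cos ψ
        + Real.sqrt ((N:ℝ)-1)*c*(1-Real.cos ψ))^2
      + (1 - Real.cos ψ^2)*(s*(1-2*Real.cos ψ) - N*s - Real.sqrt ((N:ℝ)-1)*c)^2 := by
  have hN0 : (N:ℂ) ≠ 0 := Nat.cast_ne_zero.2 (by omega)
  have hw : (N:ℂ) * ((groverA N ψ).mulVec ![(s:ℂ), (c:ℂ)] 0) =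
      Complex.ofReal ((Real.cos ψ - Real.cos ψ^2 + Real.sin ψ^2)*s - N*s*Real.cos ψ
          + Real.sqrt ((N:ℝ)-1)*c*(1-Real.cos ψ))
      + Complex.ofReal (Real.sin ψ*(s*(1-2*Real.cos ψ) - N*s
          - Real.sqrt ((N:ℝ)-1)*c)) * Complex.I := by
    have he : Complex.exp (↑ψ * Complex.I) = ↑(Real.cos ψ) + ↑(Real.sin ψ) * Complex.I := by
      rw [Complex.exp_mul_I, ← Complex.ofReal_cos, ← Complex.ofReal_sin]
    simp only [groverA, Matrix.mulVec, dotProduct, Fin.sum_univ_two,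
      Matrix.cons_val', Matrix.cons_val_zero, Matrix.cons_val_one, Matrix.head_cons,
      Matrix.empty_val', Matrix.cons_val_fin_one, Matrix.head_fin_const, Matrix.of_apply, he]
    field_simp
    ring_nf
    simp only [Complex.I_sq]
    push_cast
    ring
  have habs : ‖(N:ℂ) * ((groverA N ψ).mulVec ![(s:ℂ), (c:ℂ)] 0)‖ ^ 2
      = (N:ℝ)^2 * targetProb N ψ ![(s:ℂ), (c:ℂ)] := by
    rw [norm_mul, mul_pow, Complex.norm_natCast, targetProb]
  rw [← habs, hw, Complex.sq_norm, Complex.normSq_add_mul_I]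
  linear_combination (s*((Real.cos ψ - Real.cos ψ^2 + Real.sin ψ^2)*s - N*s*Real.cos ψ
      + Real.sqrt ((N:ℝ)-1)*c*(1-Real.cos ψ) + (Real.cos ψ + 1 - 2*Real.cos ψ^2)*s
      - N*s*Real.cos ψ + Real.sqrt ((N:ℝ)-1)*c*(1-Real.cos ψ))
      + (s*(1-2*Real.cos ψ) - N*s - Real.sqrt ((N:ℝ)-1)*c)^2) * (Real.sin_sq ψ)

theorem stmt_16 (N : ℕ) (hN : 2 ≤ N) (α : ℝ) (hα : α ∈ Set.Ioo 0 (Real.pi / 2))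
    (hthresh : Real.sin α ^ 2 ≤
      (1 / 2) * (1 + ((N : ℝ) - 6) / Real.sqrt ((N : ℝ) ^ 2 - 8 * N + 32)))
    (v : Fin 2 → ℂ) (hv : v = ![(Real.sin α : ℂ), (Real.cos α : ℂ)]) :
    ∀ φ ∈ Set.Icc (-Real.pi) Real.pi,
      targetProb N φ v ≤ targetProb N Real.pi v := by
  intro φ _
  obtain ⟨hα0, hα1⟩ := hα
  set s := Real.sin α with hs
  set c := Real.cos α with hc
  set k := Real.sqrt ((N:ℝ)-1) with hkdef
  set r := Real.sqrt ((N:ℝ)^2 - 8*N + 32) with hrdef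
  have hNR : (2:ℝ) ≤ (N:ℝ) := by exact_mod_cast hN
  have hk0 : 0 ≤ k := Real.sqrt_nonneg _
  have hk2 : k^2 = (N:ℝ) - 1 := Real.sq_sqrt (by linarith)
  have hr0 : 0 ≤ r := Real.sqrt_nonneg _
  have hr2 : r^2 = 4*k^2 + ((N:ℝ)-6)^2 := by
    rw [hk2, hrdef, Real.sq_sqrt (by nlinarith [sq_nonneg ((N:ℝ)-4)])]; ring
  have hrpos : 0 < r := by nlinarith [sq_nonneg ((N:ℝ)-6)]
  have hspos : 0 < s := Real.sin_pos_of_pos_of_lt_pi hα0 (by linarith [Real.pi_pos])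
  have hcpos : 0 < c := Real.cos_pos_of_mem_Ioo ⟨by linarith [Real.pi_pos], hα1⟩
  have hsc1 : s^2 + c^2 = 1 := Real.sin_sq_add_cos_sq α
  -- threshold gives r*(c²-s²) + (N-6) ≥ 0
  have hrCm : 0 ≤ r*(c^2-s^2) + ((N:ℝ)-6) := by
    have h1 : r*(2*s^2-1) ≤ (N:ℝ)-6 := by
      have h2 : (2*s^2-1) ≤ ((N:ℝ)-6)/r := by linarith [hthresh]
      calc r*(2*s^2-1) ≤ r*(((N:ℝ)-6)/r) := by
            exact mul_le_mul_of_nonneg_left h2 hr0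
        _ = (N:ℝ)-6 := by field_simp
    nlinarith
  have hF : 0 ≤ 2*k*(c^2-s^2) + ((N:ℝ)-6)*(2*s*c) := by
    apply grover_key_s16 k ((N:ℝ)-6) r (c^2-s^2) (2*s*c) hk0 hr0 hr2
    · nlinarith
    · positivity
    · exact hrCm
  -- reduce to the explicit inequality
  have hN2 : (0:ℝ) < (N:ℝ)^2 := by positivity
  rw [hv]
  apply le_of_mul_le_mul_left _ hN2
  rw [grover_formula N hN s c φ, grover_formula N hN s c Real.pi, Real.cos_pi]
  have hcf1 : -1 ≤ Real.cos φ := Real.neg_one_le_cos φ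
  set cf := Real.cos φ
  have hΔ : (((-1:ℝ) + 1 - 2*(-1:ℝ)^2)*s - N*s*(-1) + k*c*(1-(-1)))^2
      + (1 - (-1:ℝ)^2)*(s*(1-2*(-1)) - N*s - k*c)^2
      - (((cf + 1 - 2*cf^2)*s - N*s*cf + k*c*(1-cf))^2
        + (1 - cf^2)*(s*(1-2*cf) - N*s - k*c)^2)
      = (1+cf)*k*(2*k*(c^2-s^2)+((N:ℝ)-6)*(2*s*c)) + 4*(k*(s*c))*(1+cf)^2 := by
    linear_combination (2*s^2*(1+cf)) * hk2
  linarith [hΔ, mul_nonneg (mul_nonneg (by linarith : (0:ℝ) ≤ 1+cf) hk0) hF,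
    mul_nonneg (mul_nonneg hk0 (by positivity : (0:ℝ) ≤ s*c)) (sq_nonneg (1+cf))]
end
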